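/- Let N ≥ 2, σ_w, σ_b > 0 with 0 < σ_w² < 2. Define h: (0,∞) × (0,∞) × (0,N) → ℝ by h(r₊, r₋, k) = (1/2) [ (r₊² + r₋²)/(σ_w² r₊²/N + σ_b²) + N log(σ_w² r₊²/N + σ_b²) + (N − k)(3 log(N − k) − 2 log r₊) + k (3 log k − 2 log r₋) ]. Then h is differentiable and its gradient vanishes at the point r₊ = r₋ = √( N σ_b² / (2 − σ_w²) ), k = N/2. -/

import Mathlib

/-- Saddle point of the uniform energy of the rectified linear stochastic
network: the energy density `h(r₊, r₋, k)` is differentiable on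
`(0,∞) × (0,∞) × (0,N)` and its gradient vanishes at
`r₊ = r₋ = √(N σ_b²/(2 − σ_w²))`, `k = N/2`. -/
theorem relu_ring_uniform_saddle_point
    (N : ℕ) (hN : 2 ≤ N) (σw σb : ℝ) (hσw : 0 < σw ^ 2) (hσw2 : σw ^ 2 < 2) (hσb : 0 < σb)
    (h : ℝ × ℝ × ℝ → ℝ)
    (hh : ∀ p : ℝ × ℝ × ℝ, h p = (1 / 2) *
      ((p.1 ^ 2 + p.2.1 ^ 2) / (σw ^ 2 * p.1 ^ 2 / N + σb ^ 2) +
        N * Real.log (σw ^ 2 * p.1 ^ 2 / N + σb ^ 2) +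
        (N - p.2.2) * (3 * Real.log (N - p.2.2) - 2 * Real.log p.1) +
        p.2.2 * (3 * Real.log p.2.2 - 2 * Real.log p.2.1))) :
    DifferentiableOn ℝ h (Set.Ioi 0 ×ˢ Set.Ioi 0 ×ˢ Set.Ioo 0 (N : ℝ)) ∧
      HasFDerivAt h (0 : ℝ × ℝ × ℝ →L[ℝ] ℝ)
        (Real.sqrt (N * σb ^ 2 / (2 - σw ^ 2)),
          Real.sqrt (N * σb ^ 2 / (2 - σw ^ 2)), (N : ℝ) / 2) := by
  set F : ℝ × ℝ × ℝ → ℝ := fun p => (1 / 2) *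
      ((p.1 ^ 2 + p.2.1 ^ 2) / (σw ^ 2 * p.1 ^ 2 / N + σb ^ 2) +
        N * Real.log (σw ^ 2 * p.1 ^ 2 / N + σb ^ 2) +
        (N - p.2.2) * (3 * Real.log (N - p.2.2) - 2 * Real.log p.1) +
        p.2.2 * (3 * Real.log p.2.2 - 2 * Real.log p.2.1)) with hFdef
  have hfe : h = F := funext hh
  have hN2 : (2:ℝ) ≤ (N:ℝ) := by exact_mod_cast hN
  have hN0 : (0:ℝ) < (N:ℝ) := by linarith
  have h2s : (0:ℝ) < 2 - σw ^ 2 := by linarith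
  set r := Real.sqrt ((N:ℝ) * σb ^ 2 / (2 - σw ^ 2)) with hrdef
  have hargpos : 0 < (N:ℝ) * σb ^ 2 / (2 - σw ^ 2) := by positivity
  have hr : 0 < r := Real.sqrt_pos.mpr hargpos
  have hr2 : r ^ 2 = (N:ℝ) * σb ^ 2 / (2 - σw ^ 2) := Real.sq_sqrt hargpos.le
  have hA0 : σw ^ 2 * r ^ 2 / N + σb ^ 2 = 2 * r ^ 2 / N := by
    rw [hr2]; field_simp; ring
  -- differentiability at every point of the domain
  have hdAt : ∀ p : ℝ × ℝ × ℝ, 0 < p.1 → 0 < p.2.1 → 0 < p.2.2 → p.2.2 < (N:ℝ) →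
      DifferentiableAt ℝ F p := by
    intro p hx hy hk0 hkN
    have hA : (0:ℝ) < σw ^ 2 * p.1 ^ 2 / N + σb ^ 2 := by positivity
    have hNk : (0:ℝ) < (N:ℝ) - p.2.2 := by linarith
    have dx : DifferentiableAt ℝ (fun q : ℝ × ℝ × ℝ => q.1) p := differentiableAt_fst
    have dy : DifferentiableAt ℝ (fun q : ℝ × ℝ × ℝ => q.2.1) p := differentiableAt_snd.fst
    have dk : DifferentiableAt ℝ (fun q : ℝ × ℝ × ℝ => q.2.2) p := differentiableAt_snd.snd
    have dA : DifferentiableAt ℝ (fun q : ℝ × ℝ × ℝ => σw ^ 2 * q.1 ^ 2 * ((N:ℝ))⁻¹ + σb ^ 2) p :=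
      (((dx.pow 2).const_mul (σw ^ 2)).mul_const ((N:ℝ))⁻¹).add_const (σb ^ 2)
    have hA' : (0:ℝ) < σw ^ 2 * p.1 ^ 2 * ((N:ℝ))⁻¹ + σb ^ 2 := by positivity
    rw [hFdef]
    simp only [div_eq_mul_inv]
    exact ((((((dx.pow 2).add (dy.pow 2)).mul (dA.inv hA'.ne')).add
        ((dA.log hA'.ne').const_mul _)).add
        (((differentiableAt_const _).sub dk).mul
          (((((differentiableAt_const _).sub dk).log hNk.ne').const_mul 3).sub
            ((dx.log hx.ne').const_mul 2)))).add
        (dk.mul (((dk.log hk0.ne').const_mul 3).sub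
          ((dy.log hy.ne').const_mul 2)))).const_mul _
  rw [hfe]
  constructor
  · intro p hp
    exact (hdAt p hp.1 hp.2.1 hp.2.2.1 hp.2.2.2).differentiableWithinAt
  · have hNhalf0 : (0:ℝ) < (N:ℝ) / 2 := by linarith
    have hNhalfN : (N:ℝ) / 2 < (N:ℝ) := by linarith
    have hdP : DifferentiableAt ℝ F (r, r, (N:ℝ)/2) := hdAt _ hr hr hNhalf0 hNhalfN
    have HF := hdP.hasFDerivAt
    have hx2 : HasDerivAt (fun x : ℝ => x ^ 2) (2 * r) r := by
      simpa using hasDerivAt_pow 2 r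
    have hA0pos : (0:ℝ) < σw ^ 2 * r ^ 2 / N + σb ^ 2 := by positivity
    have hAder : HasDerivAt (fun x : ℝ => σw ^ 2 * x ^ 2 / N + σb ^ 2)
        (σw ^ 2 * (2 * r) / N) r := by
      exact ((hx2.const_mul (σw ^ 2)).div_const _).add_const _
    have hlogr : HasDerivAt Real.log r⁻¹ r := Real.hasDerivAt_log hr.ne'
    -- partial derivative in the first variable
    have H1 : HasDerivAt (fun x : ℝ => (1 / 2) *
        ((x ^ 2 + r ^ 2) / (σw ^ 2 * x ^ 2 / N + σb ^ 2) +
          N * Real.log (σw ^ 2 * x ^ 2 / N + σb ^ 2) +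
          ((N:ℝ) - (N:ℝ)/2) * (3 * Real.log ((N:ℝ) - (N:ℝ)/2) - 2 * Real.log x) +
          ((N:ℝ)/2) * (3 * Real.log ((N:ℝ)/2) - 2 * Real.log r))) 0 r := by
      have t1 := (hx2.add_const (r ^ 2)).div hAder hA0pos.ne'
      have t2 := (hAder.log hA0pos.ne').const_mul (N:ℝ)
      have t3 := ((hlogr.const_mul (2:ℝ)).const_sub
        (3 * Real.log ((N:ℝ) - (N:ℝ)/2))).const_mul ((N:ℝ) - (N:ℝ)/2)
      have t4 := hasDerivAt_const r (((N:ℝ)/2) * (3 * Real.log ((N:ℝ)/2) - 2 * Real.log r))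
      have Ht := (((t1.add t2).add t3).add t4).const_mul (1/2 : ℝ)
      refine Ht.congr_deriv (Eq.symm ?_)
      show (0:ℝ) = _
      rw [hA0]
      field_simp
      ring
    -- partial derivative in the second variable
    have H2 : HasDerivAt (fun y : ℝ => (1 / 2) *
        ((r ^ 2 + y ^ 2) / (σw ^ 2 * r ^ 2 / N + σb ^ 2) +
          N * Real.log (σw ^ 2 * r ^ 2 / N + σb ^ 2) +
          ((N:ℝ) - (N:ℝ)/2) * (3 * Real.log ((N:ℝ) - (N:ℝ)/2) - 2 * Real.log r) +
          ((N:ℝ)/2) * (3 * Real.log ((N:ℝ)/2) - 2 * Real.log y))) 0 r := by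
      have t1 := (hx2.const_add (r ^ 2)).div_const (σw ^ 2 * r ^ 2 / N + σb ^ 2)
      have t2 := hasDerivAt_const r ((N:ℝ) * Real.log (σw ^ 2 * r ^ 2 / N + σb ^ 2))
      have t3 := hasDerivAt_const r
        (((N:ℝ) - (N:ℝ)/2) * (3 * Real.log ((N:ℝ) - (N:ℝ)/2) - 2 * Real.log r))
      have t4 := ((hlogr.const_mul (2:ℝ)).const_sub
        (3 * Real.log ((N:ℝ)/2))).const_mul ((N:ℝ)/2)
      have Ht := (((t1.add t2).add t3).add t4).const_mul (1/2 : ℝ)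
      refine Ht.congr_deriv (Eq.symm ?_)
      show (0:ℝ) = _
      rw [hA0]
      field_simp
      ring
    -- partial derivative in the third variable
    have hNk2 : (0:ℝ) < (N:ℝ) - (N:ℝ)/2 := by linarith
    have H3 : HasDerivAt (fun k : ℝ => (1 / 2) *
        ((r ^ 2 + r ^ 2) / (σw ^ 2 * r ^ 2 / N + σb ^ 2) +
          N * Real.log (σw ^ 2 * r ^ 2 / N + σb ^ 2) +
          ((N:ℝ) - k) * (3 * Real.log ((N:ℝ) - k) - 2 * Real.log r) +
          k * (3 * Real.log k - 2 * Real.log r))) 0 ((N:ℝ)/2) := by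
      have t1 := hasDerivAt_const ((N:ℝ)/2)
        ((r ^ 2 + r ^ 2) / (σw ^ 2 * r ^ 2 / N + σb ^ 2))
      have t2 := hasDerivAt_const ((N:ℝ)/2)
        ((N:ℝ) * Real.log (σw ^ 2 * r ^ 2 / N + σb ^ 2))
      have tu : HasDerivAt (fun k : ℝ => (N:ℝ) - k) (-1) ((N:ℝ)/2) :=
        (hasDerivAt_id _).const_sub _
      have tv := ((tu.log hNk2.ne').const_mul (3:ℝ)).sub_const (2 * Real.log r)
      have t3 := tu.mul tv
      have tlogk : HasDerivAt Real.log ((N:ℝ)/2)⁻¹ ((N:ℝ)/2) :=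
        Real.hasDerivAt_log hNhalf0.ne'
      have tw := (tlogk.const_mul (3:ℝ)).sub_const (2 * Real.log r)
      have t4 := (hasDerivAt_id ((N:ℝ)/2)).mul tw
      have Ht := (((t1.add t2).add t3).add t4).const_mul (1/2 : ℝ)
      refine Ht.congr_deriv (Eq.symm ?_)
      show (0:ℝ) = _
      have hhalf : (N:ℝ) - (N:ℝ)/2 = (N:ℝ)/2 := by ring
      rw [hhalf]
      simp only [id_eq]
      field_simp
      ring
    -- lines through the saddle point
    have c1 : HasDerivAt (fun t : ℝ => ((t, r, (N:ℝ)/2) : ℝ × ℝ × ℝ))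
        ((1:ℝ), (0:ℝ), (0:ℝ)) r :=
      (hasDerivAt_id r).prodMk ((hasDerivAt_const r r).prodMk (hasDerivAt_const r ((N:ℝ)/2)))
    have c2 : HasDerivAt (fun t : ℝ => ((r, t, (N:ℝ)/2) : ℝ × ℝ × ℝ))
        ((0:ℝ), (1:ℝ), (0:ℝ)) r :=
      (hasDerivAt_const r r).prodMk ((hasDerivAt_id r).prodMk (hasDerivAt_const r ((N:ℝ)/2)))
    have c3 : HasDerivAt (fun t : ℝ => ((r, r, t) : ℝ × ℝ × ℝ))
        ((0:ℝ), (0:ℝ), (1:ℝ)) ((N:ℝ)/2) :=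
      (hasDerivAt_const _ r).prodMk ((hasDerivAt_const _ r).prodMk (hasDerivAt_id _))
    have key1 : fderiv ℝ F (r, r, (N:ℝ)/2) ((1:ℝ), (0:ℝ), (0:ℝ)) = 0 := by
      have hline := HF.comp_hasDerivAt r c1
      have H1' : HasDerivAt (F ∘ fun t : ℝ => ((t, r, (N:ℝ)/2) : ℝ × ℝ × ℝ)) 0 r := H1
      exact hline.unique H1'
    have key2 : fderiv ℝ F (r, r, (N:ℝ)/2) ((0:ℝ), (1:ℝ), (0:ℝ)) = 0 := by
      have hline := HF.comp_hasDerivAt r c2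
      have H2' : HasDerivAt (F ∘ fun t : ℝ => ((r, t, (N:ℝ)/2) : ℝ × ℝ × ℝ)) 0 r := H2
      exact hline.unique H2'
    have key3 : fderiv ℝ F (r, r, (N:ℝ)/2) ((0:ℝ), (0:ℝ), (1:ℝ)) = 0 := by
      have hline := HF.comp_hasDerivAt ((N:ℝ)/2) c3
      have H3' : HasDerivAt (F ∘ fun t : ℝ => ((r, r, t) : ℝ × ℝ × ℝ)) 0 ((N:ℝ)/2) := H3
      exact hline.unique H3'
    have hL : fderiv ℝ F (r, r, (N:ℝ)/2) = 0 := by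
      apply ContinuousLinearMap.ext
      rintro ⟨a, b, c⟩
      have hv : ((a, b, c) : ℝ × ℝ × ℝ) =
          a • ((1:ℝ), (0:ℝ), (0:ℝ)) + b • ((0:ℝ), (1:ℝ), (0:ℝ)) + c • ((0:ℝ), (0:ℝ), (1:ℝ)) := by
        simp [Prod.ext_iff]
      rw [hv, map_add, map_add, map_smul, map_smul, map_smul, key1, key2, key3]
      simp
    rw [← hL]
    exact HF
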